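/- Let r ≥ 2, let x_1, …, x_r be roots of unity, and let k_1, …, k_r ≥ 1 with (k_r, x_r) ≠ (1,1). Then the difference S̃i_{k_1,…,k_r}(x_1,…,x_r) - (-1)^{k_1+⋯+k_r+r} (x_2 x_3^2 ⋯ x_r^{r-1}) S̃i_{k_1,…,k_r}(x_1^{-1},…,x_r^{-1}) equals (√x_2)(√x_3)^2 ⋯ (√x_r)^{r-1} times the sum over all sign choices σ_1, …, σ_r ∈ {±1} of σ_2 σ_3^2 ⋯ σ_r^{r-1} ( Li_{k_1,…,k_r}(σ_1√x_1, …, σ_r√x_r) - (-1)^{k_1+⋯+k_r+r} Li_{k_1,…,k_r}(1/(σ_1√x_1), …, 1/(σ_r√x_r)) ), where √x_j denotes a fixed square root of x_j. -/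

import Mathlib

open Complex Filter Finset Topology

/-- Polylogarithm `Li_p(x) = ∑_{n≥1} x^n / n^p`. -/
noncomputable def cLi (p : ℕ) (x : ℂ) : ℂ := ∑' n : ℕ, x ^ (n + 1) / ((n : ℂ) + 1) ^ p

/-- t-polylogarithm `t̃_p(x) = ∑_{n≥1} x^n / (n - 1/2)^p`. -/
noncomputable def ctt (p : ℕ) (x : ℂ) : ℂ := ∑' n : ℕ, x ^ (n + 1) / ((n : ℂ) + 1 / 2) ^ p

/-- Finite sum `ζ_n(p;x) = ∑_{k=1}^n x^k / k^p`. -/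
noncomputable def czfin (n p : ℕ) (x : ℂ) : ℂ :=
  ∑ k ∈ Finset.range n, x ^ (k + 1) / ((k : ℂ) + 1) ^ p

/-- Finite sum `t_n(p;x) = ∑_{k=1}^n x^k / (k - 1/2)^p`. -/
noncomputable def ctfin (n p : ℕ) (x : ℂ) : ℂ :=
  ∑ k ∈ Finset.range n, x ^ (k + 1) / ((k : ℂ) + 1 / 2) ^ p

/-- `φ(s;x) = ∑_{k≥0} x^k / (k + s)`. -/
noncomputable def cphi (s x : ℂ) : ℂ := ∑' k : ℕ, x ^ k / ((k : ℂ) + s)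

/-- `Φ(s;x) = φ(s;x) - φ(-s;x⁻¹) - 1/s`. -/
noncomputable def cPhi (s x : ℂ) : ℂ := cphi s x - cphi (-s) x⁻¹ - 1 / s

/-- `x` is a root of unity. -/
def IsRootOfUnity (x : ℂ) : Prop := ∃ n : ℕ, 0 < n ∧ x ^ n = 1

/-- Linear cyclotomic Euler R-sum `R_{p;q}(x;y) = ∑_{n≥0} ζ_n(p;x) y^n/(n+1/2)^q`. -/
noncomputable def cR1 (p q : ℕ) (x y : ℂ) : ℂ :=
  ∑' n : ℕ, czfin n p x * y ^ n / ((n : ℂ) + 1 / 2) ^ q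

/-- Quadratic cyclotomic Euler R-sum `R_{p,r;q}(x,z;y)`. -/
noncomputable def cR2 (p r q : ℕ) (x z y : ℂ) : ℂ :=
  ∑' n : ℕ, czfin n p x * czfin n r z * y ^ n / ((n : ℂ) + 1 / 2) ^ q

/-- Linear cyclotomic Euler S̃-sum `S̃_{p;q}(x;y) = ∑_{n≥1} t_n(p;x) y^n/n^q`. -/
noncomputable def cS1 (p q : ℕ) (x y : ℂ) : ℂ :=
  ∑' n : ℕ, ctfin (n + 1) p x * y ^ (n + 1) / ((n : ℂ) + 1) ^ q

/-- Quadratic cyclotomic Euler S̃-sum `S̃_{p,r;q}(x,z;y)`. -/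
noncomputable def cS2 (p r q : ℕ) (x z y : ℂ) : ℂ :=
  ∑' n : ℕ, ctfin (n + 1) p x * ctfin (n + 1) r z * y ^ (n + 1) / ((n : ℂ) + 1) ^ q

/-- Multiple polylogarithm `Li_{k₁,…,k_r}(z₁,…,z_r)`. -/
noncomputable def cMPL {r : ℕ} (k : Fin r → ℕ) (z : Fin r → ℂ) : ℂ :=
  ∑' n : {n : Fin r → ℕ // StrictMono n ∧ ∀ i, 0 < n i},
    ∏ i, z i ^ (n.1 i) / ((n.1 i : ℂ)) ^ (k i)

/-- Cyclotomic multiple S-value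
`S̃i_{k₁,…,k_r}(x₁,…,x_r) = 2^r ∑_{0<n₁<⋯<n_r} ∏ x_i^{n_i} / (2n_i - (i-1))^{k_i}`. -/
noncomputable def cSival {r : ℕ} (k : Fin r → ℕ) (x : Fin r → ℂ) : ℂ :=
  2 ^ r * ∑' n : {n : Fin r → ℕ // StrictMono n ∧ ∀ i, 0 < n i},
    ∏ i, x i ^ (n.1 i) / (2 * ((n.1 i : ℂ)) - ((i : ℕ) : ℂ)) ^ (k i)


namespace SivalAux

abbrev Tup (r : ℕ) := {n : Fin r → ℕ // StrictMono n ∧ ∀ i, 0 < n i}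

lemma Tup.lt {r : ℕ} (n : Tup r) : ∀ (v : ℕ) (hv : v < r), v < n.1 ⟨v, hv⟩ := by
  intro v
  induction v with
  | zero => exact fun hv => n.2.2 _
  | succ w ih =>
    intro hv
    have h2 : (⟨w, by omega⟩ : Fin r) < ⟨w + 1, hv⟩ := by simp [Fin.lt_def]
    have := n.2.1 h2
    have := ih (by omega)
    omega

lemma summable_pi_prod : ∀ (r : ℕ) (g : ℕ → ℝ), (∀ m, 0 ≤ g m) → Summable g →
    Summable (fun n : Fin r → ℕ => ∏ i, g (n i)) := by
  intro r
  induction r with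
  | zero => intro g _ _; exact Summable.of_finite
  | succ s ih =>
    intro g hg0 hg
    have h1 : Summable (fun x : ℕ × (Fin s → ℕ) => g x.1 * ∏ i, g (x.2 i)) :=
      Summable.mul_of_nonneg (f := g) (g := fun n : Fin s → ℕ => ∏ i, g (n i)) hg
        (ih g hg0 hg) hg0 (fun v => Finset.prod_nonneg fun i _ => hg0 _)
    have h2 := h1.comp_injective (Fin.consEquiv (fun _ : Fin (s+1) => ℕ)).symm.injective
    refine h2.congr fun n => ?_
    simp only [Function.comp]
    rw [Fin.prod_univ_succ]
    rfl

end SivalAux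

namespace SivalAux2
open SivalAux Real

lemma summable_rpow_shift (p : ℝ) (hp : 1 < p) :
    Summable (fun m : ℕ => ((m : ℝ) + 1) ^ (-p)) := by
  have h := (Real.summable_nat_rpow (p := -p)).mpr (by linarith)
  have h2 := (summable_nat_add_iff 1).mpr h
  refine h2.congr fun m => ?_
  push_cast
  ring_nf

lemma norm_bound {r : ℕ} (hr : 0 < r) (k : Fin r → ℕ) (hk : ∀ i, 1 ≤ k i)
    (hkl : 2 ≤ k ⟨r - 1, by omega⟩) (z : Fin r → ℂ) (hz : ∀ i, ‖z i‖ ≤ 1)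
    (n : Tup r) :
    ‖∏ i, z i ^ (n.1 i) / ((n.1 i : ℂ)) ^ (k i)‖ ≤ ∏ i, ((n.1 i : ℝ)) ^ (-(1 + 1/(r:ℝ))) := by
  have hr' : (r:ℝ) ≠ 0 := Nat.cast_ne_zero.mpr (by omega)
  set p : ℝ := 1 + 1/(r:ℝ) with hp
  set L : Fin r := ⟨r - 1, by omega⟩ with hL
  have hpos : ∀ i, (0:ℝ) < (n.1 i : ℝ) := fun i => by exact_mod_cast n.2.2 i
  have h1 : ∀ i, (1:ℝ) ≤ (n.1 i : ℝ) := fun i => by exact_mod_cast n.2.2 i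
  have hle : ∀ i, (n.1 i : ℝ) ≤ (n.1 L : ℝ) := by
    intro i
    exact_mod_cast Nat.cast_le.mpr (n.2.1.monotone (by rw [Fin.le_def]; simp [hL]; omega))
  have hprodpos : (0:ℝ) < ∏ i, (n.1 i : ℝ) ^ p :=
    Finset.prod_pos fun i _ => Real.rpow_pos_of_pos (hpos i) _
  rw [norm_prod]
  have key1 : ∏ i, (n.1 i:ℝ) ^ p = (∏ i, (n.1 i:ℝ)) * ∏ i, (n.1 i:ℝ) ^ (1/(r:ℝ)) := by
    rw [← Finset.prod_mul_distrib]
    refine Finset.prod_congr rfl fun i _ => ?_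
    rw [hp, Real.rpow_add (hpos i), Real.rpow_one]
  have key2 : ∏ i, (n.1 i:ℝ) ^ (1/(r:ℝ)) ≤ (n.1 L : ℝ) := by
    calc ∏ i, (n.1 i:ℝ) ^ (1/(r:ℝ)) ≤ ∏ i, (n.1 L:ℝ) ^ (1/(r:ℝ)) :=
          Finset.prod_le_prod (fun i _ => Real.rpow_nonneg (hpos i).le _)
            (fun i _ => Real.rpow_le_rpow (hpos i).le (hle i) (by positivity))
      _ = ((n.1 L:ℝ) ^ (1/(r:ℝ))) ^ (r:ℕ) := by
          rw [Finset.prod_const, Finset.card_univ, Fintype.card_fin]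
      _ = (n.1 L:ℝ) := by
          rw [← Real.rpow_natCast ((n.1 L:ℝ) ^ (1/(r:ℝ))), ← Real.rpow_mul (hpos L).le,
            one_div, inv_mul_cancel₀ hr', Real.rpow_one]
  have key3 : (∏ i, (n.1 i:ℝ)) * (n.1 L:ℝ) ≤ ∏ i, (n.1 i:ℝ) ^ (k i) := by
    have hfac : ∀ i, (n.1 i:ℝ) * (if i = L then (n.1 i:ℝ) else 1) ≤ (n.1 i:ℝ) ^ (k i) := by
      intro i
      by_cases h : i = L
      · simp only [if_pos h]
        have hk2 : 2 ≤ k L := hkl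
        calc (n.1 i:ℝ) * (n.1 i:ℝ) = (n.1 i:ℝ) ^ (2:ℕ) := (sq _).symm
          _ ≤ (n.1 i:ℝ) ^ (k i) := pow_le_pow_right₀ (h1 i) (h ▸ hk2)
      · simp only [if_neg h, mul_one]
        calc (n.1 i:ℝ) = (n.1 i:ℝ) ^ (1:ℕ) := (pow_one _).symm
          _ ≤ (n.1 i:ℝ) ^ (k i) := pow_le_pow_right₀ (h1 i) (hk i)
    calc (∏ i, (n.1 i:ℝ)) * (n.1 L:ℝ)
        = ∏ i, ((n.1 i:ℝ) * if i = L then (n.1 i:ℝ) else 1) := by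
          rw [Finset.prod_mul_distrib, Finset.prod_ite_eq' Finset.univ L (fun i => (n.1 i:ℝ))]
          simp
      _ ≤ ∏ i, (n.1 i:ℝ) ^ (k i) :=
          Finset.prod_le_prod
            (fun i _ => mul_nonneg (hpos i).le (by split <;> [exact (hpos i).le; norm_num]))
            (fun i _ => hfac i)
  have key : ∏ i, (n.1 i:ℝ) ^ p ≤ ∏ i, (n.1 i:ℝ) ^ (k i) := by
    rw [key1]
    calc (∏ i, (n.1 i:ℝ)) * ∏ i, (n.1 i:ℝ) ^ (1/(r:ℝ))
        ≤ (∏ i, (n.1 i:ℝ)) * (n.1 L:ℝ) := by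
          apply mul_le_mul_of_nonneg_left key2
          exact Finset.prod_nonneg fun i _ => (hpos i).le
      _ ≤ _ := key3
  calc ∏ i, ‖z i ^ (n.1 i) / ((n.1 i : ℂ)) ^ (k i)‖
      ≤ ∏ i, (((n.1 i:ℝ)) ^ (k i))⁻¹ := by
        refine Finset.prod_le_prod (fun i _ => norm_nonneg _) fun i _ => ?_
        rw [norm_div, norm_pow, norm_pow, Complex.norm_natCast, div_eq_mul_inv]
        apply mul_le_of_le_one_left (by positivity)
        exact pow_le_one₀ (norm_nonneg _) (hz i)
    _ = (∏ i, ((n.1 i:ℝ)) ^ (k i))⁻¹ := by rw [← Finset.prod_inv_distrib]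
    _ ≤ (∏ i, ((n.1 i:ℝ)) ^ p)⁻¹ := by
        apply inv_anti₀ hprodpos key
    _ = ∏ i, ((n.1 i:ℝ)) ^ (-p) := by
        rw [← Finset.prod_inv_distrib]
        exact Finset.prod_congr rfl fun i _ => (Real.rpow_neg (hpos i).le _).symm

lemma summable_mpl {r : ℕ} (hr : 0 < r) (k : Fin r → ℕ) (hk : ∀ i, 1 ≤ k i)
    (hkl : 2 ≤ k ⟨r - 1, by omega⟩) (z : Fin r → ℂ) (hz : ∀ i, ‖z i‖ ≤ 1) :
    Summable fun n : Tup r => ∏ i, z i ^ (n.1 i) / ((n.1 i : ℂ)) ^ (k i) := by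
  have hr' : (0:ℝ) < 1/(r:ℝ) := by positivity
  have hp1 : 1 < 1 + 1/(r:ℝ) := by linarith
  set p : ℝ := 1 + 1/(r:ℝ) with hp
  have hg : Summable (fun m : ℕ => ((m : ℝ) + 1) ^ (-p)) := summable_rpow_shift p hp1
  have hg0 : ∀ m : ℕ, 0 ≤ ((m : ℝ) + 1) ^ (-p) := fun m => Real.rpow_nonneg (by positivity) _
  have hP := summable_pi_prod r _ hg0 hg
  have hinj : Function.Injective (fun n : Tup r => (fun i => n.1 i - 1 : Fin r → ℕ)) := by
    intro a b hab
    apply Subtype.ext; funext i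
    have ha := a.2.2 i; have hb := b.2.2 i
    have h := congrFun hab i
    simp only at h
    omega
  have hM := hP.comp_injective hinj
  have hM2 : Summable (fun n : Tup r => ∏ i, ((n.1 i : ℝ)) ^ (-p)) := by
    refine hM.congr fun n => ?_
    simp only [Function.comp]
    refine Finset.prod_congr rfl fun i _ => ?_
    congr 2
    have := n.2.2 i
    push_cast [Nat.cast_sub this]
    ring
  exact Summable.of_norm_bounded hM2 (norm_bound hr k hk hkl z hz)

end SivalAux2

namespace SivalAux3
open SivalAux SivalAux2

lemma strictMono_le_add {r : ℕ} {n : Fin r → ℕ} (hn : StrictMono n) :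
    ∀ (d v : ℕ) (h : v + d < r), n ⟨v, by omega⟩ + d ≤ n ⟨v + d, h⟩ := by
  intro d
  induction d with
  | zero => intro v h; simp
  | succ e ih =>
    intro v h
    have h1 := ih v (by omega)
    have h2 : (⟨v + e, by omega⟩ : Fin r) < ⟨v + e + 1, by omega⟩ := by
      simp [Fin.lt_def]
    have h3 := hn h2
    have : n ⟨v + e + 1, by omega⟩ = n ⟨v + (e + 1), by omega⟩ := by
      congr 1
    omega

lemma sum_bool_pow (a : ℕ) (c : ℂ) :
    ∑ b : Bool, (if b then (1:ℂ) else -1) ^ a * c = if a % 2 = 0 then 2 * c else 0 := by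
  rw [Fintype.sum_bool]
  norm_num
  rcases Nat.even_or_odd a with h | h
  · rw [h.neg_one_pow, if_pos (Nat.even_iff.mp h)]
    ring
  · rw [h.neg_one_pow, if_neg (by rw [Nat.odd_iff.mp h]; omega)]
    ring

lemma lt_self {r : ℕ} (m : Tup r) (j : Fin r) : (j:ℕ) < m.1 j :=
  Tup.lt m (j:ℕ) j.2

lemma mono_gap {r : ℕ} (m : Tup r) {i j : Fin r} (hij : i < j) :
    m.1 i + ((j:ℕ) - (i:ℕ)) ≤ m.1 j := by
  have hij' : (i:ℕ) < (j:ℕ) := hij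
  have hd : (i:ℕ) + ((j:ℕ) - (i:ℕ)) < r := by have := j.2; omega
  have key := strictMono_le_add m.2.1 ((j:ℕ) - (i:ℕ)) (i:ℕ) hd
  have h3 : (⟨(i:ℕ) + ((j:ℕ) - (i:ℕ)), hd⟩ : Fin r) = j := by ext; simp; omega
  rw [h3] at key
  exact key

/-- The doubling map `m ↦ (fun j => 2 * m j - j)` on increasing tuples. -/
def dbl {r : ℕ} (m : Tup r) : Tup r :=
  ⟨fun j => 2 * m.1 j - (j : ℕ), by
    constructor
    · intro i j hij
      have hi := lt_self m i
      have hj := lt_self m j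
      have key := mono_gap m hij
      have hij' : (i:ℕ) < (j:ℕ) := hij
      show 2 * m.1 i - (i:ℕ) < 2 * m.1 j - (j:ℕ)
      omega
    · intro i
      have hi := lt_self m i
      show 0 < 2 * m.1 i - (i:ℕ)
      omega⟩

lemma dbl_apply {r : ℕ} (m : Tup r) (j : Fin r) : (dbl m).1 j = 2 * m.1 j - (j:ℕ) := rfl

lemma dbl_injective {r : ℕ} : Function.Injective (dbl (r := r)) := by
  intro a b hab
  apply Subtype.ext; funext j
  have h := congrFun (congrArg Subtype.val hab) j
  rw [dbl_apply, dbl_apply] at h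
  have ha := lt_self a j
  have hb := lt_self b j
  omega

lemma lemmaM {r : ℕ} (hr : 0 < r) (k : Fin r → ℕ) (hk : ∀ i, 1 ≤ k i)
    (hkl : 2 ≤ k ⟨r - 1, by omega⟩) (z : Fin r → ℂ) (hz : ∀ i, ‖z i‖ = 1) :
    (∏ j : Fin r, z j ^ (j : ℕ)) *
      ∑ σ : Fin r → Bool, (∏ j : Fin r, (if σ j then (1:ℂ) else -1) ^ (j : ℕ)) *
        cMPL k (fun j => (if σ j then (1:ℂ) else -1) * z j)
    = cSival k (fun j => z j ^ 2) := by
  have hz1 : ∀ (σ : Fin r → Bool) (i : Fin r), ‖(if σ i then (1:ℂ) else -1) * z i‖ ≤ 1 := by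
    intro σ i
    rw [norm_mul, hz i, mul_one]
    cases σ i <;> simp
  have hsum : ∀ σ : Fin r → Bool, Summable (fun n : Tup r =>
      ∏ i, ((if σ i then (1:ℂ) else -1) * z i) ^ (n.1 i) / ((n.1 i : ℂ)) ^ (k i)) :=
    fun σ => summable_mpl hr k hk hkl _ (hz1 σ)
  have step1 : ∑ σ : Fin r → Bool, (∏ j : Fin r, (if σ j then (1:ℂ) else -1) ^ (j : ℕ)) *
        cMPL k (fun j => (if σ j then (1:ℂ) else -1) * z j)
      = ∑' n : Tup r, ∑ σ : Fin r → Bool,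
          (∏ j : Fin r, (if σ j then (1:ℂ) else -1) ^ (j : ℕ)) *
          ∏ i, ((if σ i then (1:ℂ) else -1) * z i) ^ (n.1 i) / ((n.1 i : ℂ)) ^ (k i) := by
    rw [Summable.tsum_finsetSum (fun σ _ => Summable.mul_left _ (hsum σ))]
    refine Finset.sum_congr rfl fun σ _ => ?_
    simp only [cMPL]
    rw [tsum_mul_left]
  have step2 : ∀ n : Tup r, (∑ σ : Fin r → Bool,
        (∏ j : Fin r, (if σ j then (1:ℂ) else -1) ^ (j : ℕ)) *
        ∏ i, ((if σ i then (1:ℂ) else -1) * z i) ^ (n.1 i) / ((n.1 i : ℂ)) ^ (k i))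
      = ∏ j : Fin r, (if ((j:ℕ) + n.1 j) % 2 = 0
          then 2 * (z j ^ (n.1 j) / ((n.1 j : ℂ)) ^ (k j)) else 0) := by
    intro n
    have e1 : ∀ σ : Fin r → Bool, (∏ j : Fin r, (if σ j then (1:ℂ) else -1) ^ (j : ℕ)) *
        ∏ i, ((if σ i then (1:ℂ) else -1) * z i) ^ (n.1 i) / ((n.1 i : ℂ)) ^ (k i)
        = ∏ j : Fin r, (if σ j then (1:ℂ) else -1) ^ ((j:ℕ) + n.1 j) *
            (z j ^ (n.1 j) / ((n.1 j : ℂ)) ^ (k j)) := by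
      intro σ
      rw [← Finset.prod_mul_distrib]
      refine Finset.prod_congr rfl fun i _ => ?_
      rw [mul_pow, pow_add]
      ring
    calc ∑ σ : Fin r → Bool, (∏ j : Fin r, (if σ j then (1:ℂ) else -1) ^ (j : ℕ)) *
          ∏ i, ((if σ i then (1:ℂ) else -1) * z i) ^ (n.1 i) / ((n.1 i : ℂ)) ^ (k i)
        = ∑ σ : Fin r → Bool, ∏ j : Fin r, (if σ j then (1:ℂ) else -1) ^ ((j:ℕ) + n.1 j) *
            (z j ^ (n.1 j) / ((n.1 j : ℂ)) ^ (k j)) := Finset.sum_congr rfl fun σ _ => e1 σ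
      _ = ∏ j : Fin r, ∑ b : Bool, (if b then (1:ℂ) else -1) ^ ((j:ℕ) + n.1 j) *
            (z j ^ (n.1 j) / ((n.1 j : ℂ)) ^ (k j)) :=
          (Fintype.prod_sum (f := fun (j : Fin r) (b : Bool) =>
            (if b then (1:ℂ) else -1) ^ ((j:ℕ) + n.1 j) *
            (z j ^ (n.1 j) / ((n.1 j : ℂ)) ^ (k j)))).symm
      _ = _ := Finset.prod_congr rfl fun j _ => sum_bool_pow _ _
  have step3 : ∀ n : Tup r, (∏ j : Fin r, z j ^ (j:ℕ)) *
        (∏ j : Fin r, (if ((j:ℕ) + n.1 j) % 2 = 0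
          then 2 * (z j ^ (n.1 j) / ((n.1 j : ℂ)) ^ (k j)) else 0))
      = ∏ j : Fin r, (if ((j:ℕ) + n.1 j) % 2 = 0
          then 2 * (z j ^ ((j:ℕ) + n.1 j) / ((n.1 j : ℂ)) ^ (k j)) else 0) := by
    intro n
    rw [← Finset.prod_mul_distrib]
    refine Finset.prod_congr rfl fun j _ => ?_
    rw [mul_ite, mul_zero]
    by_cases h : ((j:ℕ) + n.1 j) % 2 = 0
    · rw [if_pos h, if_pos h, pow_add]
      ring
    · rw [if_neg h, if_neg h]
  have hsupp : Function.support (fun n : Tup r => ∏ j : Fin r, (if ((j:ℕ) + n.1 j) % 2 = 0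
          then 2 * (z j ^ ((j:ℕ) + n.1 j) / ((n.1 j : ℂ)) ^ (k j)) else 0))
      ⊆ Set.range (dbl (r := r)) := by
    intro n hn
    have hpar : ∀ j : Fin r, ((j:ℕ) + n.1 j) % 2 = 0 := by
      by_contra hcon
      push_neg at hcon
      obtain ⟨j0, hj0⟩ := hcon
      apply hn
      exact Finset.prod_eq_zero (Finset.mem_univ j0) (by rw [if_neg hj0])
    refine ⟨⟨fun j => (n.1 j + (j:ℕ)) / 2, ?_, ?_⟩, ?_⟩
    · intro i j hij
      have hpi := hpar i; have hpj := hpar j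
      have hmono := n.2.1 hij
      have hij' : (i:ℕ) < (j:ℕ) := hij
      show (n.1 i + (i:ℕ)) / 2 < (n.1 j + (j:ℕ)) / 2
      omega
    · intro i
      have h1 := hpar i; have h2 := n.2.2 i
      show 0 < (n.1 i + (i:ℕ)) / 2
      omega
    · apply Subtype.ext; funext j
      show 2 * ((n.1 j + (j:ℕ)) / 2) - (j:ℕ) = n.1 j
      have := hpar j
      omega
  have step6 : ∀ m : Tup r, (∏ j : Fin r, (if ((j:ℕ) + (dbl m).1 j) % 2 = 0
          then 2 * (z j ^ ((j:ℕ) + (dbl m).1 j) / (((dbl m).1 j : ℂ)) ^ (k j)) else 0))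
      = 2^r * ∏ j : Fin r, (z j ^ 2) ^ (m.1 j) / (2 * ((m.1 j : ℂ)) - ((j:ℕ):ℂ)) ^ (k j) := by
    intro m
    have e : ∀ j : Fin r, (if ((j:ℕ) + (dbl m).1 j) % 2 = 0
          then 2 * (z j ^ ((j:ℕ) + (dbl m).1 j) / (((dbl m).1 j : ℂ)) ^ (k j)) else 0)
        = 2 * ((z j ^ 2) ^ (m.1 j) / (2 * ((m.1 j:ℂ)) - ((j:ℕ):ℂ)) ^ (k j)) := by
      intro j
      have hj := lt_self m j
      rw [dbl_apply]
      rw [if_pos (by omega)]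
      have h1 : (j:ℕ) + (2 * m.1 j - (j:ℕ)) = 2 * m.1 j := by omega
      have h2 : ((2 * m.1 j - (j:ℕ) : ℕ) : ℂ) = 2 * ((m.1 j:ℂ)) - ((j:ℕ):ℂ) := by
        have hle : (j:ℕ) ≤ 2 * m.1 j := by omega
        push_cast [hle]
        ring
      rw [h1, h2, ← pow_mul]
    calc (∏ j : Fin r, (if ((j:ℕ) + (dbl m).1 j) % 2 = 0
          then 2 * (z j ^ ((j:ℕ) + (dbl m).1 j) / (((dbl m).1 j : ℂ)) ^ (k j)) else 0))
        = ∏ j : Fin r, 2 * ((z j ^ 2) ^ (m.1 j) / (2 * ((m.1 j:ℂ)) - ((j:ℕ):ℂ)) ^ (k j)) :=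
          Finset.prod_congr rfl fun j _ => e j
      _ = _ := by
          rw [Finset.prod_mul_distrib, Finset.prod_const, Finset.card_univ, Fintype.card_fin]
  calc (∏ j : Fin r, z j ^ (j : ℕ)) *
      ∑ σ : Fin r → Bool, (∏ j : Fin r, (if σ j then (1:ℂ) else -1) ^ (j : ℕ)) *
        cMPL k (fun j => (if σ j then (1:ℂ) else -1) * z j)
      = (∏ j : Fin r, z j ^ (j:ℕ)) * ∑' n : Tup r, ∏ j : Fin r, (if ((j:ℕ) + n.1 j) % 2 = 0
          then 2 * (z j ^ (n.1 j) / ((n.1 j : ℂ)) ^ (k j)) else 0) := by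
        rw [step1, tsum_congr step2]
    _ = ∑' n : Tup r, (∏ j : Fin r, z j ^ (j:ℕ)) * ∏ j : Fin r, (if ((j:ℕ) + n.1 j) % 2 = 0
          then 2 * (z j ^ (n.1 j) / ((n.1 j : ℂ)) ^ (k j)) else 0) := (tsum_mul_left).symm
    _ = ∑' n : Tup r, ∏ j : Fin r, (if ((j:ℕ) + n.1 j) % 2 = 0
          then 2 * (z j ^ ((j:ℕ) + n.1 j) / ((n.1 j : ℂ)) ^ (k j)) else 0) := tsum_congr step3
    _ = ∑' m : Tup r, ∏ j : Fin r, (if ((j:ℕ) + (dbl m).1 j) % 2 = 0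
          then 2 * (z j ^ ((j:ℕ) + (dbl m).1 j) / (((dbl m).1 j : ℂ)) ^ (k j)) else 0) :=
          (dbl_injective.tsum_eq hsupp).symm
    _ = ∑' m : Tup r, 2^r * ∏ j : Fin r, (z j ^ 2) ^ (m.1 j) /
          (2 * ((m.1 j : ℂ)) - ((j:ℕ):ℂ)) ^ (k j) := tsum_congr step6
    _ = 2^r * ∑' m : Tup r, ∏ j : Fin r, (z j ^ 2) ^ (m.1 j) /
          (2 * ((m.1 j : ℂ)) - ((j:ℕ):ℂ)) ^ (k j) := tsum_mul_left
    _ = cSival k (fun j => z j ^ 2) := by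
        simp only [cSival]

end SivalAux3

namespace SivalAux4
open SivalAux SivalAux3

def tup (r : ℕ) (hr : 0 < r) (m : ℕ) : Tup r :=
  ⟨fun j => if (j:ℕ) = r - 1 then m + r else (j:ℕ) + 1, by
    constructor
    · intro i j hij
      have hij' : (i:ℕ) < (j:ℕ) := hij
      have hi := i.2; have hj := j.2
      show (if (i:ℕ) = r - 1 then m + r else (i:ℕ) + 1)
          < (if (j:ℕ) = r - 1 then m + r else (j:ℕ) + 1)
      by_cases h : (j:ℕ) = r - 1
      · rw [if_pos h, if_neg (by omega)]
        omega
      · rw [if_neg h, if_neg (by omega)]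
        omega
    · intro i
      show 0 < if (i:ℕ) = r - 1 then m + r else (i:ℕ) + 1
      split <;> omega⟩

lemma tup_injective (r : ℕ) (hr : 0 < r) : Function.Injective (tup r hr) := by
  intro a b hab
  have h := congrFun (congrArg Subtype.val hab) ⟨r - 1, by omega⟩
  simp only [tup, if_pos rfl, eq_self_iff_true, if_true] at h
  omega

lemma not_summable_of_lower (r : ℕ) (hr : 0 < r) (f : Tup r → ℂ) (C : ℝ) (hC : 0 < C)
    (hb : ∀ m : ℕ, C / ((m:ℝ) + r + 1) ≤ ‖f (tup r hr m)‖) : ¬ Summable f := by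
  intro h
  have h1 : Summable (fun n : Tup r => ‖f n‖) := h.norm
  have h2 := h1.comp_injective (tup_injective r hr)
  have h3 : Summable (fun m : ℕ => C / ((m:ℝ) + r + 1)) :=
    Summable.of_nonneg_of_le (fun m => by positivity) hb h2
  have h4 : Summable (fun m : ℕ => ((m:ℝ) + r + 1)⁻¹) := by
    have h5 := h3.mul_left C⁻¹
    refine h5.congr fun m => ?_
    rw [div_eq_mul_inv, ← mul_assoc, inv_mul_cancel₀ (ne_of_gt hC), one_mul]
  have h6 : Summable (fun m : ℕ => ((m + (r+1) : ℕ):ℝ)⁻¹) := by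
    refine h4.congr fun m => ?_
    push_cast
    ring_nf
  have h7 := (summable_nat_add_iff (f := fun n : ℕ => ((n:ℝ))⁻¹) (r+1)).mp h6
  exact Real.not_summable_natCast_inv h7

lemma mpl_zero {r : ℕ} (hr : 0 < r) (k : Fin r → ℕ)
    (hkl : k ⟨r - 1, by omega⟩ = 1) (z : Fin r → ℂ) (hz : ∀ i, ‖z i‖ = 1) :
    cMPL k z = 0 := by
  unfold cMPL
  apply tsum_eq_zero_of_not_summable
  set L : Fin r := ⟨r - 1, by omega⟩ with hL
  have hkl' : k L = 1 := hkl
  have hr1 : (1:ℝ) ≤ (r:ℝ) := by exact_mod_cast hr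
  set C0 : ℝ := ∏ j ∈ Finset.univ.erase L, (((j:ℕ):ℝ) + 1) ^ (k j) with hC0
  have hC0pos : 0 < C0 := Finset.prod_pos fun j _ => by positivity
  apply not_summable_of_lower r hr _ C0⁻¹ (by positivity)
  intro m
  have htupL : (tup r hr m).1 L = m + r := by
    show (if ((L:ℕ) = r - 1) then m + r else (L:ℕ) + 1) = m + r
    rw [if_pos rfl]
  have htupO : ∀ j : Fin r, j ≠ L → (tup r hr m).1 j = (j:ℕ) + 1 := by
    intro j hj
    show (if ((j:ℕ) = r - 1) then m + r else (j:ℕ) + 1) = (j:ℕ) + 1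
    exact if_neg (fun hc => hj (Fin.ext hc))
  have hnorm : ‖∏ i, z i ^ ((tup r hr m).1 i) / (((tup r hr m).1 i : ℂ)) ^ (k i)‖
      = (((m:ℝ) + r) * C0)⁻¹ := by
    rw [norm_prod]
    have hfac : ∀ j : Fin r, ‖z j ^ ((tup r hr m).1 j) / (((tup r hr m).1 j : ℂ)) ^ (k j)‖
        = ((((tup r hr m).1 j : ℝ)) ^ (k j))⁻¹ := by
      intro j
      rw [norm_div, norm_pow, norm_pow, hz j, one_pow, Complex.norm_natCast, one_div]
    rw [Finset.prod_congr rfl fun j _ => hfac j, Finset.prod_inv_distrib]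
    congr 1
    rw [← Finset.mul_prod_erase Finset.univ _ (Finset.mem_univ L), htupL, hkl', pow_one]
    have h2 : ∏ j ∈ Finset.univ.erase L, (((tup r hr m).1 j : ℝ)) ^ (k j) = C0 := by
      rw [hC0]
      refine Finset.prod_congr rfl fun j hj => ?_
      rw [htupO j (Finset.ne_of_mem_erase hj)]
      push_cast
      ring
    rw [h2]
    push_cast
    ring
  rw [hnorm, div_eq_mul_inv, ← mul_inv]
  apply inv_anti₀ (by positivity)
  nlinarith [hC0pos]

lemma sival_zero {r : ℕ} (hr : 0 < r) (k : Fin r → ℕ)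
    (hkl : k ⟨r - 1, by omega⟩ = 1) (x : Fin r → ℂ) (hx : ∀ i, ‖x i‖ = 1) :
    cSival k x = 0 := by
  unfold cSival
  rw [tsum_eq_zero_of_not_summable, mul_zero]
  set L : Fin r := ⟨r - 1, by omega⟩ with hL
  have hkl' : k L = 1 := hkl
  have hr1 : (1:ℝ) ≤ (r:ℝ) := by exact_mod_cast hr
  set C0 : ℝ := ∏ j ∈ Finset.univ.erase L, (((j:ℕ):ℝ) + 2) ^ (k j) with hC0
  have hC0pos : 0 < C0 := Finset.prod_pos fun j _ => by positivity
  apply not_summable_of_lower r hr _ ((2 * C0)⁻¹) (by positivity)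
  intro m
  have htupL : (tup r hr m).1 L = m + r := by
    show (if ((L:ℕ) = r - 1) then m + r else (L:ℕ) + 1) = m + r
    rw [if_pos rfl]
  have htupO : ∀ j : Fin r, j ≠ L → (tup r hr m).1 j = (j:ℕ) + 1 := by
    intro j hj
    show (if ((j:ℕ) = r - 1) then m + r else (j:ℕ) + 1) = (j:ℕ) + 1
    exact if_neg (fun hc => hj (Fin.ext hc))
  have hgt : ∀ j : Fin r, (j:ℕ) < (tup r hr m).1 j := fun j => lt_self _ j
  have hcast : ∀ j : Fin r, 2 * (((tup r hr m).1 j : ℕ) : ℂ) - ((j:ℕ):ℂ)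
      = ((2 * (tup r hr m).1 j - (j:ℕ) : ℕ) : ℂ) := by
    intro j
    have hle : (j:ℕ) ≤ 2 * (tup r hr m).1 j := by have := hgt j; omega
    push_cast [hle]
    ring
  have hnorm : ‖∏ i, x i ^ ((tup r hr m).1 i) /
        (2 * (((tup r hr m).1 i : ℕ) : ℂ) - ((i:ℕ):ℂ)) ^ (k i)‖
      = ((2 * (m:ℝ) + r + 1) * C0)⁻¹ := by
    rw [norm_prod]
    have hfac : ∀ j : Fin r, ‖x j ^ ((tup r hr m).1 j) /
          (2 * (((tup r hr m).1 j : ℕ) : ℂ) - ((j:ℕ):ℂ)) ^ (k j)‖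
        = (((2 * (tup r hr m).1 j - (j:ℕ) : ℕ) : ℝ) ^ (k j))⁻¹ := by
      intro j
      rw [norm_div, norm_pow, norm_pow, hx j, one_pow, hcast j, Complex.norm_natCast, one_div]
    rw [Finset.prod_congr rfl fun j _ => hfac j, Finset.prod_inv_distrib]
    congr 1
    rw [← Finset.mul_prod_erase Finset.univ _ (Finset.mem_univ L), htupL, hkl', pow_one]
    have h2 : ∏ j ∈ Finset.univ.erase L,
        (((2 * (tup r hr m).1 j - (j:ℕ) : ℕ) : ℝ)) ^ (k j) = C0 := by
      rw [hC0]
      refine Finset.prod_congr rfl fun j hj => ?_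
      rw [htupO j (Finset.ne_of_mem_erase hj)]
      have : 2 * ((j:ℕ) + 1) - (j:ℕ) = (j:ℕ) + 2 := by omega
      rw [this]
      push_cast
      ring
    rw [h2]
    have hLval : (L:ℕ) = r - 1 := rfl
    have : 2 * (m + r) - (L:ℕ) = 2 * m + r + 1 := by rw [hLval]; omega
    rw [this]
    push_cast
    ring
  rw [hnorm, div_eq_mul_inv, ← mul_inv]
  apply inv_anti₀ (by positivity)
  nlinarith [hC0pos]

end SivalAux4

/-- Parity of cyclotomic multiple S-values in terms of multiple polylogarithms at
square roots of the arguments. -/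
theorem Sival_parity (r : ℕ) (hr : 2 ≤ r) (k : Fin r → ℕ) (x sq : Fin r → ℂ)
    (hroot : ∀ j, IsRootOfUnity (x j)) (hk : ∀ j, 1 ≤ k j)
    (hsq : ∀ j, sq j ^ 2 = x j)
    (hlast : ¬(k ⟨r - 1, by omega⟩ = 1 ∧ x ⟨r - 1, by omega⟩ = 1)) :
    cSival k x -
        (-1 : ℂ) ^ (∑ j, k j + r) * (∏ j, x j ^ (j : ℕ)) * cSival k (fun j => (x j)⁻¹) =
      (∏ j, sq j ^ (j : ℕ)) *
        ∑ σ : Fin r → Bool,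
          (∏ j, (if σ j then (1 : ℂ) else -1) ^ (j : ℕ)) *
            (cMPL k (fun j => (if σ j then (1 : ℂ) else -1) * sq j) -
              (-1 : ℂ) ^ (∑ j, k j + r) *
                cMPL k (fun j => ((if σ j then (1 : ℂ) else -1) * sq j)⁻¹)) := by
  classical
  have hr0 : 0 < r := by omega
  have hxnorm : ∀ j, ‖x j‖ = 1 := by
    intro j
    obtain ⟨n, hn, h1⟩ := hroot j
    have h2 : ‖x j‖ ^ n = 1 := by rw [← norm_pow, h1, norm_one]
    by_contra hne
    rcases lt_or_gt_of_ne hne with h | h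
    · have h3 := pow_lt_one₀ (norm_nonneg (x j)) h (n := n) (by omega)
      rw [h2] at h3; exact lt_irrefl _ h3
    · have h3 := one_lt_pow₀ h (n := n) (by omega)
      rw [h2] at h3; exact lt_irrefl _ h3
  have hsqnorm : ∀ j, ‖sq j‖ = 1 := by
    intro j
    have h2 : ‖sq j‖ ^ 2 = 1 := by rw [← norm_pow, hsq j, hxnorm j]
    nlinarith [norm_nonneg (sq j)]
  have hsqne : ∀ j, sq j ≠ 0 := by
    intro j h
    have h2 := hsqnorm j
    rw [h] at h2
    simp at h2
  have hepsnorm : ∀ (σ : Fin r → Bool) (i : Fin r),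
      ‖(if σ i then (1:ℂ) else -1) * sq i‖ = 1 := by
    intro σ i
    rw [norm_mul, hsqnorm i, mul_one]
    cases σ i <;> simp
  by_cases hcase : k ⟨r - 1, by omega⟩ = 1
  · have h1 : cSival k x = 0 := SivalAux4.sival_zero hr0 k hcase x hxnorm
    have h2 : cSival k (fun j => (x j)⁻¹) = 0 :=
      SivalAux4.sival_zero hr0 k hcase _ (fun i => by rw [norm_inv, hxnorm, inv_one])
    have h3 : ∀ σ : Fin r → Bool,
        cMPL k (fun j => (if σ j then (1:ℂ) else -1) * sq j) = 0 :=
      fun σ => SivalAux4.mpl_zero hr0 k hcase _ (hepsnorm σ)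
    have h4 : ∀ σ : Fin r → Bool,
        cMPL k (fun j => ((if σ j then (1:ℂ) else -1) * sq j)⁻¹) = 0 :=
      fun σ => SivalAux4.mpl_zero hr0 k hcase _
        (fun i => by rw [norm_inv, hepsnorm σ i, inv_one])
    rw [h1, h2]
    simp only [h3, h4]
    simp
  · have hkl2 : 2 ≤ k ⟨r - 1, by omega⟩ := by
      have := hk ⟨r - 1, by omega⟩
      omega
    have hM1 := SivalAux3.lemmaM hr0 k hk hkl2 sq hsqnorm
    have hM2 := SivalAux3.lemmaM hr0 k hk hkl2 (fun j => (sq j)⁻¹)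
      (fun i => by rw [norm_inv, hsqnorm, inv_one])
    rw [show (fun j => sq j ^ 2) = x from funext hsq] at hM1
    have harg : ∀ σ : Fin r → Bool,
        (fun j => (if σ j then (1:ℂ) else -1) * (sq j)⁻¹)
        = (fun j => ((if σ j then (1:ℂ) else -1) * sq j)⁻¹) := by
      intro σ
      funext j
      cases hσ : σ j <;> simp [mul_inv, inv_neg]
    rw [show (fun j => ((sq j)⁻¹) ^ 2) = (fun j => (x j)⁻¹) from
      funext (fun j => by rw [inv_pow, hsq])] at hM2
    simp only [harg] at hM2
    set c : ℂ := (-1 : ℂ) ^ (∑ j, k j + r) with hc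
    set Psq : ℂ := ∏ j, sq j ^ (j : ℕ) with hPsq
    set Psqinv : ℂ := ∏ j, ((sq j)⁻¹) ^ (j : ℕ) with hPsqinv
    have hPP : Psq * Psqinv = 1 := by
      rw [hPsq, hPsqinv, ← Finset.prod_mul_distrib]
      rw [Finset.prod_congr rfl (fun j _ => by
        rw [← mul_pow, mul_inv_cancel₀ (hsqne j), one_pow])]
      exact Finset.prod_const_one
    have hPx : (∏ j, x j ^ (j : ℕ)) = Psq * Psq := by
      rw [hPsq, ← Finset.prod_mul_distrib]
      refine Finset.prod_congr rfl fun j _ => ?_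
      rw [← hsq j, ← pow_mul, ← pow_add]
      ring_nf
    have hsplit : (∑ σ : Fin r → Bool,
          (∏ j, (if σ j then (1 : ℂ) else -1) ^ (j : ℕ)) *
            (cMPL k (fun j => (if σ j then (1 : ℂ) else -1) * sq j) -
              c * cMPL k (fun j => ((if σ j then (1 : ℂ) else -1) * sq j)⁻¹)))
        = (∑ σ : Fin r → Bool, (∏ j, (if σ j then (1 : ℂ) else -1) ^ (j : ℕ)) *
            cMPL k (fun j => (if σ j then (1 : ℂ) else -1) * sq j))
          - c * ∑ σ : Fin r → Bool, (∏ j, (if σ j then (1 : ℂ) else -1) ^ (j : ℕ)) *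
            cMPL k (fun j => ((if σ j then (1 : ℂ) else -1) * sq j)⁻¹) := by
      rw [Finset.mul_sum, ← Finset.sum_sub_distrib]
      refine Finset.sum_congr rfl fun σ _ => ?_
      ring
    rw [hsplit, mul_sub, hM1]
    have h5 : Psq * (c * ∑ σ : Fin r → Bool,
          (∏ j, (if σ j then (1 : ℂ) else -1) ^ (j : ℕ)) *
          cMPL k (fun j => ((if σ j then (1 : ℂ) else -1) * sq j)⁻¹))
        = c * (∏ j, x j ^ (j : ℕ)) * cSival k (fun j => (x j)⁻¹) := by
      rw [hPx]
      linear_combination (c * Psq * Psq) * hM2 - (c * Psq * (∑ σ : Fin r → Bool,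
          (∏ j, (if σ j then (1 : ℂ) else -1) ^ (j : ℕ)) *
          cMPL k (fun j => ((if σ j then (1 : ℂ) else -1) * sq j)⁻¹))) * hPP
    rw [h5]
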